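/- On the unit 2-sphere S²(1) with the uniform magnetic field F = μΩ₂ (μ ≠ 0), every normal (unit-speed) magnetic curve is a circle of Euclidean radius r = 1/√(1+μ²) < 1; consequently, no two antipodal points of S² can be joined by a normal magnetic curve of (S², g, μΩ₂). -/

import Mathlib

open RealInnerProductSpace

/-- The cross product on `ℝ³ = EuclideanSpace ℝ (Fin 3)`. -/
noncomputable def cross3 (u v : EuclideanSpace ℝ (Fin 3)) : EuclideanSpace ℝ (Fin 3) :=
  (WithLp.equiv 2 (Fin 3 → ℝ)).symm
    ![u 1 * v 2 - u 2 * v 1, u 2 * v 0 - u 0 * v 2, u 0 * v 1 - u 1 * v 0]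

/-- On the unit sphere `S²(1)` with the uniform magnetic field `μ Ω₂`, `μ ≠ 0`,
every normal (unit-speed) magnetic curve — i.e. a unit-speed spherical curve with
`γ'' = μ (γ × γ') - γ` — is a circle of Euclidean radius `r = 1/√(1+μ²) < 1`;
consequently it never joins two antipodal points. -/
theorem sphere_magnetic_curves_are_small_circles
    (μ : ℝ) (hμ : μ ≠ 0)
    (γ γ' γ'' : ℝ → EuclideanSpace ℝ (Fin 3))
    (hsphere : ∀ t, ‖γ t‖ = 1)
    (hγ : ∀ t, HasDerivAt γ (γ' t) t)
    (hγ' : ∀ t, HasDerivAt γ' (γ'' t) t)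
    (hunit : ∀ t, ‖γ' t‖ = 1)
    (hmag : ∀ t, γ'' t = μ • cross3 (γ t) (γ' t) - γ t) :
    (∃ c : EuclideanSpace ℝ (Fin 3),
      ∀ t, ‖γ t - c‖ = 1 / Real.sqrt (1 + μ ^ 2)) ∧
    1 / Real.sqrt (1 + μ ^ 2) < 1 ∧
    (∀ t s : ℝ, γ t ≠ -γ s) := by
  have hp : (0:ℝ) < 1 + μ ^ 2 := by positivity
  have hμ2 : (0:ℝ) < μ ^ 2 := lt_of_le_of_ne (sq_nonneg μ) (Ne.symm (pow_ne_zero 2 hμ))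
  have hc : ∀ (i : Fin 3) t, HasDerivAt (fun s => γ s i) (γ' t i) t := fun i t => by
    exact (EuclideanSpace.proj i).hasFDerivAt.comp_hasDerivAt t (hγ t)
  have hc' : ∀ (i : Fin 3) t, HasDerivAt (fun s => γ' s i) (γ'' t i) t := fun i t => by
    exact (EuclideanSpace.proj i).hasFDerivAt.comp_hasDerivAt t (hγ' t)
  have hs1 : ∀ t, (γ t 0)^2 + (γ t 1)^2 + (γ t 2)^2 = 1 := by
    intro t
    have h := hsphere t
    rw [EuclideanSpace.norm_eq] at h
    have h2 : (∑ i, ‖γ t i‖ ^ 2) = 1 := by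
      rw [← Real.sq_sqrt (show (0:ℝ) ≤ ∑ i, ‖γ t i‖ ^ 2 by positivity), h]; norm_num
    simpa [Fin.sum_univ_three, sq_abs] using h2
  have hu1 : ∀ t, (γ' t 0)^2 + (γ' t 1)^2 + (γ' t 2)^2 = 1 := by
    intro t
    have h := hunit t
    rw [EuclideanSpace.norm_eq] at h
    have h2 : (∑ i, ‖γ' t i‖ ^ 2) = 1 := by
      rw [← Real.sq_sqrt (show (0:ℝ) ≤ ∑ i, ‖γ' t i‖ ^ 2 by positivity), h]; norm_num
    simpa [Fin.sum_univ_three, sq_abs] using h2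
  have hs2 : ∀ t, γ t 0 * γ' t 0 + γ t 1 * γ' t 1 + γ t 2 * γ' t 2 = 0 := by
    intro t
    have hD := ((hc 0 t).pow 2).add (((hc 1 t).pow 2).add ((hc 2 t).pow 2))
    have hconst : HasDerivAt (fun s => γ s 0 ^ 2 + (γ s 1 ^ 2 + γ s 2 ^ 2)) 0 t := by
      have he : (fun s => γ s 0 ^ 2 + (γ s 1 ^ 2 + γ s 2 ^ 2)) = fun _ => (1:ℝ) :=
        funext fun s => by have := hs1 s; linarith
      rw [he]; exact hasDerivAt_const _ _
    have hu := hD.unique hconst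
    push_cast at hu
    nlinarith [hu]
  have hm : ∀ t, γ'' t 0 = μ * (γ t 1 * γ' t 2 - γ t 2 * γ' t 1) - γ t 0
      ∧ γ'' t 1 = μ * (γ t 2 * γ' t 0 - γ t 0 * γ' t 2) - γ t 1
      ∧ γ'' t 2 = μ * (γ t 0 * γ' t 1 - γ t 1 * γ' t 0) - γ t 2 := by
    intro t
    have h := hmag t
    refine ⟨?_, ?_, ?_⟩ <;>
      · rw [h]
        simp [cross3, PiLp.sub_apply, PiLp.smul_apply, smul_eq_mul,
          WithLp.equiv_symm_apply, PiLp.toLp_apply]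
  have const : ∀ (f f' : ℝ → ℝ), (∀ t, HasDerivAt f (f' t) t) → (∀ t, f' t = 0) →
      ∀ t, f t = f 0 := fun f f' h h0 t =>
    is_const_of_deriv_eq_zero (fun s => (h s).differentiableAt)
      (fun s => by rw [(h s).deriv, h0]) t 0
  have hv0 : ∀ t, μ * γ t 0 + (γ t 1 * γ' t 2 - γ t 2 * γ' t 1)
      = μ * γ 0 0 + (γ 0 1 * γ' 0 2 - γ 0 2 * γ' 0 1) := by
    refine const _ (fun t => μ * γ' t 0 + (γ' t 1 * γ' t 2 + γ t 1 * γ'' t 2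
      - (γ' t 2 * γ' t 1 + γ t 2 * γ'' t 1))) (fun t => ?_) (fun t => ?_)
    · exact ((hc 0 t).const_mul μ).add (((hc 1 t).mul (hc' 2 t)).sub ((hc 2 t).mul (hc' 1 t)))
    · obtain ⟨h0, h1, h2⟩ := hm t
      linear_combination γ t 1 * h2 - γ t 2 * h1 + (μ * γ t 0) * hs2 t - (μ * γ' t 0) * hs1 t
  have hv1 : ∀ t, μ * γ t 1 + (γ t 2 * γ' t 0 - γ t 0 * γ' t 2)
      = μ * γ 0 1 + (γ 0 2 * γ' 0 0 - γ 0 0 * γ' 0 2) := by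
    refine const _ (fun t => μ * γ' t 1 + (γ' t 2 * γ' t 0 + γ t 2 * γ'' t 0
      - (γ' t 0 * γ' t 2 + γ t 0 * γ'' t 2))) (fun t => ?_) (fun t => ?_)
    · exact ((hc 1 t).const_mul μ).add (((hc 2 t).mul (hc' 0 t)).sub ((hc 0 t).mul (hc' 2 t)))
    · obtain ⟨h0, h1, h2⟩ := hm t
      linear_combination γ t 2 * h0 - γ t 0 * h2 + (μ * γ t 1) * hs2 t - (μ * γ' t 1) * hs1 t
  have hv2 : ∀ t, μ * γ t 2 + (γ t 0 * γ' t 1 - γ t 1 * γ' t 0)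
      = μ * γ 0 2 + (γ 0 0 * γ' 0 1 - γ 0 1 * γ' 0 0) := by
    refine const _ (fun t => μ * γ' t 2 + (γ' t 0 * γ' t 1 + γ t 0 * γ'' t 1
      - (γ' t 1 * γ' t 0 + γ t 1 * γ'' t 0))) (fun t => ?_) (fun t => ?_)
    · exact ((hc 2 t).const_mul μ).add (((hc 0 t).mul (hc' 1 t)).sub ((hc 1 t).mul (hc' 0 t)))
    · obtain ⟨h0, h1, h2⟩ := hm t
      linear_combination γ t 0 * h1 - γ t 1 * h0 + (μ * γ t 2) * hs2 t - (μ * γ' t 2) * hs1 t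
  set c : EuclideanSpace ℝ (Fin 3) :=
    (μ / (1 + μ ^ 2)) • (μ • γ 0 + cross3 (γ 0) (γ' 0)) with hcdef
  have hci : ∀ i : Fin 3, c i = μ / (1 + μ ^ 2) * (μ * γ 0 i + cross3 (γ 0) (γ' 0) i) := by
    intro i
    simp [hcdef, PiLp.smul_apply, PiLp.add_apply, smul_eq_mul]
    ring
  have hcross0 : cross3 (γ 0) (γ' 0) 0 = γ 0 1 * γ' 0 2 - γ 0 2 * γ' 0 1 := by
    simp [cross3, WithLp.equiv_symm_apply, PiLp.toLp_apply]
  have hcross1 : cross3 (γ 0) (γ' 0) 1 = γ 0 2 * γ' 0 0 - γ 0 0 * γ' 0 2 := by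
    simp [cross3, WithLp.equiv_symm_apply, PiLp.toLp_apply]
  have hcross2 : cross3 (γ 0) (γ' 0) 2 = γ 0 0 * γ' 0 1 - γ 0 1 * γ' 0 0 := by
    simp [cross3, WithLp.equiv_symm_apply, PiLp.toLp_apply]
  have hradius : ∀ t, ‖γ t - c‖ = 1 / Real.sqrt (1 + μ ^ 2) := by
    intro t
    have e0 : c 0 = μ / (1 + μ ^ 2) * (μ * γ t 0 + (γ t 1 * γ' t 2 - γ t 2 * γ' t 1)) := by
      rw [hci 0, hcross0, ← hv0 t]
    have e1 : c 1 = μ / (1 + μ ^ 2) * (μ * γ t 1 + (γ t 2 * γ' t 0 - γ t 0 * γ' t 2)) := by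
      rw [hci 1, hcross1, ← hv1 t]
    have e2 : c 2 = μ / (1 + μ ^ 2) * (μ * γ t 2 + (γ t 0 * γ' t 1 - γ t 1 * γ' t 0)) := by
      rw [hci 2, hcross2, ← hv2 t]
    have hp' : (1 + μ ^ 2) ≠ 0 := ne_of_gt hp
    have hy : (γ t 0 - μ*(γ t 1*γ' t 2 - γ t 2*γ' t 1))^2
        + (γ t 1 - μ*(γ t 2*γ' t 0 - γ t 0*γ' t 2))^2
        + (γ t 2 - μ*(γ t 0*γ' t 1 - γ t 1*γ' t 0))^2 = 1 + μ^2 := by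
      linear_combination (1 + μ^2*((γ' t 0)^2 + (γ' t 1)^2 + (γ' t 2)^2)) * hs1 t
        + μ^2 * hu1 t
        - (μ^2 * (γ t 0*γ' t 0 + γ t 1*γ' t 1 + γ t 2*γ' t 2)) * hs2 t
    have f0 : γ t 0 - c 0 = (γ t 0 - μ*(γ t 1*γ' t 2 - γ t 2*γ' t 1)) / (1 + μ^2) := by
      rw [e0]; field_simp; ring
    have f1 : γ t 1 - c 1 = (γ t 1 - μ*(γ t 2*γ' t 0 - γ t 0*γ' t 2)) / (1 + μ^2) := by
      rw [e1]; field_simp; ring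
    have f2 : γ t 2 - c 2 = (γ t 2 - μ*(γ t 0*γ' t 1 - γ t 1*γ' t 0)) / (1 + μ^2) := by
      rw [e2]; field_simp; ring
    have key : (γ t 0 - c 0)^2 + (γ t 1 - c 1)^2 + (γ t 2 - c 2)^2 = 1 / (1 + μ ^ 2) := by
      rw [f0, f1, f2, div_pow, div_pow, div_pow, ← add_div, ← add_div, hy]
      field_simp
    have hnorm : ‖γ t - c‖ = Real.sqrt ((γ t 0 - c 0)^2 + (γ t 1 - c 1)^2 + (γ t 2 - c 2)^2) := by
      rw [EuclideanSpace.norm_eq]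
      simp [Fin.sum_univ_three, sq_abs]
    rw [hnorm, key, one_div, one_div, Real.sqrt_inv]
  have h1 : (1:ℝ) < Real.sqrt (1 + μ ^ 2) := by
    calc (1:ℝ) = Real.sqrt 1 := (Real.sqrt_one).symm
      _ < Real.sqrt (1 + μ ^ 2) := Real.sqrt_lt_sqrt (by norm_num) (by linarith)
  have hlt : 1 / Real.sqrt (1 + μ ^ 2) < 1 := by
    rw [div_lt_one (by linarith)]; exact h1
  refine ⟨⟨c, hradius⟩, hlt, ?_⟩
  intro t s h
  have hd : ‖γ t - γ s‖ = 2 := by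
    rw [h]
    have : -γ s - γ s = (-2 : ℝ) • γ s := by
      ext i; simp [PiLp.sub_apply, PiLp.neg_apply, PiLp.smul_apply]; ring
    rw [this, norm_smul, hsphere s]
    norm_num
  have htr : ‖γ t - γ s‖ ≤ ‖γ t - c‖ + ‖γ s - c‖ := by
    have := norm_sub_le (γ t - c) (γ s - c)
    simpa [sub_sub_sub_cancel_right] using this
  rw [hd, hradius t, hradius s] at htr
  linarith
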